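/- Let n ≥ 1, C ∈ ℝ^{1×n}, let A : ℝ → ℝ^{n×n} and B : ℝ → ℝⁿ be locally Lipschitz, let u : [t₀,t₁] → ℝ be measurable and bounded, and suppose there exists g > 0 such that every absolutely continuous ω : [t₀,t₁] → ℝⁿ with ω'(t) = A(u(t))ω(t) for almost every t satisfies ∫_{t₀}^{t₁} |Cω(s)|² ds ≥ g|ω(t₁)|² (positive-definiteness of the observability Gramian of u). Then the system is observable for u on [t₀,t₁]: for any two absolutely continuous x_a, x_b : [t₀,t₁] → ℝⁿ satisfying x'(t) = A(u(t))x(t) + B(u(t)) for almost every t, if Cx_a(t) = Cx_b(t) for all t ∈ [t₀,t₁], then x_a(t) = x_b(t) for all t ∈ [t₀,t₁]. -/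

import Mathlib

open Matrix Set

/-- Inclusion of `Fin n → ℝ` into `EuclideanSpace ℝ (Fin n)` (a definitional identity,
used to select the Euclidean norm). -/
def toEuc {n : ℕ} (v : Fin n → ℝ) : EuclideanSpace ℝ (Fin n) := WithLp.toLp 2 v


lemma gronwall_int {φ : ℝ → ℝ} {a b K S : ℝ} (hK : 0 ≤ K) (hS : 0 ≤ S)
    (hφc : ContinuousOn φ (Icc a b)) (hφS : ∀ t ∈ Icc a b, φ t ≤ S)
    (hineq : ∀ t ∈ Icc a b, φ t ≤ K * ∫ s in t..b, φ s) :
    ∀ t ∈ Icc a b, φ t ≤ 0 := by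
  have key : ∀ k : ℕ, ∀ t ∈ Icc a b, φ t ≤ S * ((K * (b - t)) ^ k / (Nat.factorial k)) := by
    intro k
    induction k with
    | zero => intro t ht; simpa using hφS t ht
    | succ k ih =>
      intro t ht
      have htb : t ≤ b := ht.2
      have hbt : 0 ≤ b - t := by linarith
      have hsub : Icc t b ⊆ Icc a b := Icc_subset_Icc ht.1 le_rfl
      have hφint : IntervalIntegrable φ MeasureTheory.volume t b := by
        have h : ContinuousOn φ (uIcc t b) := by
          rw [uIcc_of_le htb]; exact hφc.mono hsub
        exact h.intervalIntegrable
      have hgint : IntervalIntegrable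
          (fun s => S * ((K * (b - s)) ^ k / (Nat.factorial k))) MeasureTheory.volume t b := by
        apply Continuous.intervalIntegrable; fun_prop
      have hmono : ∫ s in t..b, φ s ≤ ∫ s in t..b, S * ((K * (b - s)) ^ k / (Nat.factorial k)) := by
        apply intervalIntegral.integral_mono_on htb hφint hgint
        intro s hs
        exact ih s (hsub hs)
      have hcalc : ∫ s in t..b, S * ((K * (b - s)) ^ k / (Nat.factorial k))
          = (S * K ^ k / (Nat.factorial k)) * ((b - t) ^ (k + 1) / (k + 1)) := by
        have h1 : ∀ s : ℝ, S * ((K * (b - s)) ^ k / (Nat.factorial k))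
            = (S * K ^ k / (Nat.factorial k)) * (b - s) ^ k := by
          intro s; rw [mul_pow]; ring
        simp only [h1]
        rw [intervalIntegral.integral_const_mul]
        have h2 : ∫ s in t..b, (b - s) ^ k = ∫ x in (b - b)..(b - t), x ^ k :=
          intervalIntegral.integral_comp_sub_left (fun x => x ^ k) b
        rw [h2, sub_self, integral_pow]
        ring
      have hchain : φ t ≤ K * ((S * K ^ k / (Nat.factorial k)) * ((b - t) ^ (k + 1) / (k + 1))) := by
        calc φ t ≤ K * ∫ s in t..b, φ s := hineq t ht
        _ ≤ _ := by
            rw [← hcalc]; exact mul_le_mul_of_nonneg_left hmono hK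
      refine hchain.trans (le_of_eq ?_)
      rw [Nat.factorial_succ, mul_pow]
      push_cast
      have hk : (Nat.factorial k : ℝ) ≠ 0 := by positivity
      field_simp
      ring
  intro t ht
  have htend : Filter.Tendsto (fun k : ℕ => S * ((K * (b - t)) ^ k / (Nat.factorial k)))
      Filter.atTop (nhds 0) := by
    have := (FloorSemiring.tendsto_pow_div_factorial_atTop (K * (b - t))).const_mul S
    simpa using this
  exact ge_of_tendsto htend (Filter.Eventually.of_forall fun k => key k t ht)


/-- If the observability Gramian of a measurable bounded input `u` on
`[t₀,t₁]` is positive definite — i.e. every absolutely continuous solution of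
`ω' = A(u(t))ω` (encoded by its integral equation) satisfies
`∫_{t₀}^{t₁} |Cω|² ds ≥ g|ω(t₁)|²` for some `g > 0` — then the state-affine system
`x' = A(u(t))x + B(u(t))`, `y = Cx` is observable for `u` on `[t₀,t₁]`: two solutions
with the same output coincide. -/
theorem gramian_posDef_implies_observable
    {n : ℕ} (hn : 1 ≤ n) (C : Matrix (Fin 1) (Fin n) ℝ)
    (A : ℝ → Matrix (Fin n) (Fin n) ℝ) (B : ℝ → Fin n → ℝ)
    (hA : LocallyLipschitz (fun u => Matrix.of.symm (A u)))
    (hB : LocallyLipschitz B)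
    (t₀ t₁ : ℝ) (ht : t₀ ≤ t₁)
    (u : ℝ → ℝ) (hu : Measurable u) (M : ℝ) (huM : ∀ t ∈ Set.Icc t₀ t₁, |u t| ≤ M)
    (g : ℝ) (hg : 0 < g)
    (hgram : ∀ ω : ℝ → EuclideanSpace ℝ (Fin n),
      ContinuousOn ω (Set.Icc t₀ t₁) →
      (∀ t ∈ Set.Icc t₀ t₁,
        ω t = ω t₀ + ∫ s in t₀..t, toEuc (A (u s) *ᵥ ω s)) →
      g * ‖ω t₁‖ ^ 2 ≤ ∫ s in t₀..t₁, ((C *ᵥ ω s) 0) ^ 2)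
    (xa xb : ℝ → EuclideanSpace ℝ (Fin n))
    (hxa : ContinuousOn xa (Set.Icc t₀ t₁))
    (hxb : ContinuousOn xb (Set.Icc t₀ t₁))
    (hxaeq : ∀ t ∈ Set.Icc t₀ t₁,
      xa t = xa t₀ + ∫ s in t₀..t, toEuc (A (u s) *ᵥ xa s + B (u s)))
    (hxbeq : ∀ t ∈ Set.Icc t₀ t₁,
      xb t = xb t₀ + ∫ s in t₀..t, toEuc (A (u s) *ᵥ xb s + B (u s)))
    (hy : ∀ t ∈ Set.Icc t₀ t₁, C *ᵥ xa t = C *ᵥ xb t) :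
    ∀ t ∈ Set.Icc t₀ t₁, xa t = xb t := by
  classical
  -- continuous linear map version of mulVec
  let Φ : Matrix (Fin n) (Fin n) ℝ →ₗ[ℝ]
      (EuclideanSpace ℝ (Fin n) →L[ℝ] EuclideanSpace ℝ (Fin n)) :=
    (LinearMap.toContinuousLinearMap.toLinearMap).comp (Matrix.toEuclideanLin.toLinearMap)
  have hΦapp : ∀ (D : Matrix (Fin n) (Fin n) ℝ) (v : EuclideanSpace ℝ (Fin n)),
      Φ D v = toEuc (D *ᵥ v) := fun D v => rfl
  have hΦcont : Continuous Φ := Φ.continuous_of_finiteDimensional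
  let Ψ : EuclideanSpace ℝ (Fin n) →L[ℝ] EuclideanSpace ℝ (Fin 1) :=
    LinearMap.toContinuousLinearMap (Matrix.toEuclideanLin C)
  have hΨapp : ∀ v : EuclideanSpace ℝ (Fin n), Ψ v = toEuc (C *ᵥ v) := fun v => rfl
  have hAc : Continuous A := hA.continuous
  have hBc : Continuous B := hB.continuous
  have htoEuc : Continuous (toEuc (n := n)) := PiLp.continuous_toLp 2 _
  -- bound on operator norms
  have ht₀mem : t₀ ∈ Icc t₀ t₁ := ⟨le_rfl, ht⟩
  have ht₁mem : t₁ ∈ Icc t₀ t₁ := ⟨ht, le_rfl⟩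
  obtain ⟨K₀, hK₀⟩ := (isCompact_Icc (a := -M) (b := M)).exists_bound_of_continuousOn
      ((hΦcont.comp hAc).continuousOn)
  set K := max K₀ 0 with hKdef
  have hK : 0 ≤ K := le_max_right _ _
  have humem : ∀ s ∈ Icc t₀ t₁, u s ∈ Icc (-M) M := by
    intro s hs
    have := abs_le.1 (huM s hs)
    exact ⟨this.1, this.2⟩
  have hKA : ∀ s ∈ Icc t₀ t₁, ‖Φ (A (u s))‖ ≤ K := by
    intro s hs
    exact (hK₀ _ (humem s hs)).trans (le_max_left _ _)
  -- general integrability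
  have key_int : ∀ (x : ℝ → EuclideanSpace ℝ (Fin n)), ContinuousOn x (Icc t₀ t₁) →
      ∀ (h : ℝ → EuclideanSpace ℝ (Fin n)), Measurable h →
      (∃ R, ∀ s ∈ Icc t₀ t₁, ‖h s‖ ≤ R) →
      ∀ c d, c ∈ Icc t₀ t₁ → d ∈ Icc t₀ t₁ →
      IntervalIntegrable (fun s => toEuc (A (u s) *ᵥ x s) + h s) MeasureTheory.volume c d := by
    rintro x hx h hhm ⟨R, hR⟩ c d hc hd
    obtain ⟨W, hW⟩ := (isCompact_Icc (a := t₀) (b := t₁)).exists_bound_of_continuousOn hx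
    have hsub : Set.uIoc c d ⊆ Icc t₀ t₁ := by
      refine (Set.uIoc_subset_uIcc).trans ?_
      exact Set.uIcc_subset_Icc hc hd
    have hmble : MeasurableSet (Set.uIoc c d) := measurableSet_uIoc
    rw [intervalIntegrable_iff]
    have hxm : AEMeasurable x (MeasureTheory.volume.restrict (Set.uIoc c d)) :=
      ((hx.mono hsub).aemeasurable hmble)
    have h1 : AEMeasurable (fun s => Φ (A (u s)) (x s))
        (MeasureTheory.volume.restrict (Set.uIoc c d)) :=
      Continuous.aemeasurable2 isBoundedBilinearMap_apply.continuous
        (((hΦcont.comp hAc).measurable).comp hu).aemeasurable hxm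
    have hfm : MeasureTheory.AEStronglyMeasurable (fun s => toEuc (A (u s) *ᵥ x s) + h s)
        (MeasureTheory.volume.restrict (Set.uIoc c d)) := by
      have : (fun s => toEuc (A (u s) *ᵥ x s) + h s)
          = fun s => Φ (A (u s)) (x s) + h s := rfl
      rw [this]
      exact (h1.add hhm.aemeasurable).aestronglyMeasurable
    apply MeasureTheory.Integrable.mono' (g := fun _ => K * W + R) ?_ hfm
    · refine (MeasureTheory.ae_restrict_iff' hmble).2 (Filter.Eventually.of_forall ?_)
      intro s hs
      have hs' := hsub hs
      have e1 : toEuc (A (u s) *ᵥ x s) + h s = Φ (A (u s)) (x s) + h s := rfl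
      rw [e1]
      calc ‖Φ (A (u s)) (x s) + h s‖ ≤ ‖Φ (A (u s)) (x s)‖ + ‖h s‖ := norm_add_le _ _
      _ ≤ K * W + R := by
          refine add_le_add ?_ (hR s hs')
          calc ‖Φ (A (u s)) (x s)‖ ≤ ‖Φ (A (u s))‖ * ‖x s‖ := (Φ (A (u s))).le_opNorm _
          _ ≤ K * W := by
              apply mul_le_mul (hKA s hs') (hW s hs') (norm_nonneg _) hK
    · refine MeasureTheory.integrableOn_const (ne_of_lt ?_)
      calc MeasureTheory.volume (Set.uIoc c d) ≤ MeasureTheory.volume (Icc t₀ t₁) :=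
            MeasureTheory.measure_mono hsub
      _ < ⊤ := by rw [Real.volume_Icc]; exact ENNReal.ofReal_lt_top
  -- integrability of the three integrands
  have hBbd : ∃ R, ∀ s ∈ Icc t₀ t₁, ‖toEuc (B (u s))‖ ≤ R := by
    obtain ⟨R, hR⟩ := (isCompact_Icc (a := -M) (b := M)).exists_bound_of_continuousOn
        ((htoEuc.comp hBc).continuousOn)
    exact ⟨R, fun s hs => hR _ (humem s hs)⟩
  have hBm : Measurable (fun s => toEuc (B (u s))) := ((htoEuc.comp hBc).measurable).comp hu
  have hfa : ∀ c d, c ∈ Icc t₀ t₁ → d ∈ Icc t₀ t₁ →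
      IntervalIntegrable (fun s => toEuc (A (u s) *ᵥ xa s + B (u s)))
        MeasureTheory.volume c d := by
    intro c d hc hd
    have := key_int xa hxa (fun s => toEuc (B (u s))) hBm hBbd c d hc hd
    exact this
  have hfb : ∀ c d, c ∈ Icc t₀ t₁ → d ∈ Icc t₀ t₁ →
      IntervalIntegrable (fun s => toEuc (A (u s) *ᵥ xb s + B (u s)))
        MeasureTheory.volume c d := by
    intro c d hc hd
    have := key_int xb hxb (fun s => toEuc (B (u s))) hBm hBbd c d hc hd
    exact this
  set ω : ℝ → EuclideanSpace ℝ (Fin n) := fun t => xa t - xb t with hωdef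
  have hωc : ContinuousOn ω (Icc t₀ t₁) := hxa.sub hxb
  have hf : ∀ c d, c ∈ Icc t₀ t₁ → d ∈ Icc t₀ t₁ →
      IntervalIntegrable (fun s => toEuc (A (u s) *ᵥ ω s)) MeasureTheory.volume c d := by
    intro c d hc hd
    have := key_int ω hωc (fun _ => 0) measurable_const ⟨0, fun s _ => by simp⟩ c d hc hd
    simpa using this
  -- pointwise difference identity
  have hpt : ∀ s : ℝ, toEuc (A (u s) *ᵥ xa s + B (u s)) - toEuc (A (u s) *ᵥ xb s + B (u s))
      = toEuc (A (u s) *ᵥ ω s) := by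
    intro s
    have e1 : toEuc (A (u s) *ᵥ xa s + B (u s)) = Φ (A (u s)) (xa s) + toEuc (B (u s)) := rfl
    have e2 : toEuc (A (u s) *ᵥ xb s + B (u s)) = Φ (A (u s)) (xb s) + toEuc (B (u s)) := rfl
    have e3 : toEuc (A (u s) *ᵥ ω s) = Φ (A (u s)) (ω s) := rfl
    have e4 : ω s = xa s - xb s := rfl
    rw [e1, e2, e3, e4, map_sub]
    abel
  -- the homogeneous integral equation for ω
  have hωeq : ∀ t ∈ Icc t₀ t₁, ω t = ω t₀ + ∫ s in t₀..t, toEuc (A (u s) *ᵥ ω s) := by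
    intro t htt
    have h1 := hxaeq t htt
    have h2 := hxbeq t htt
    have hsubint : (∫ s in t₀..t, toEuc (A (u s) *ᵥ xa s + B (u s)))
        - (∫ s in t₀..t, toEuc (A (u s) *ᵥ xb s + B (u s)))
        = ∫ s in t₀..t, toEuc (A (u s) *ᵥ ω s) := by
      calc (∫ s in t₀..t, toEuc (A (u s) *ᵥ xa s + B (u s)))
          - ∫ s in t₀..t, toEuc (A (u s) *ᵥ xb s + B (u s))
          = ∫ s in t₀..t, (toEuc (A (u s) *ᵥ xa s + B (u s))
            - toEuc (A (u s) *ᵥ xb s + B (u s))) :=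
        (intervalIntegral.integral_sub (hfa t₀ t ht₀mem htt) (hfb t₀ t ht₀mem htt)).symm
      _ = ∫ s in t₀..t, toEuc (A (u s) *ᵥ ω s) :=
        intervalIntegral.integral_congr (fun s _ => hpt s)
    have e4 : ω t = xa t - xb t := rfl
    have e5 : ω t₀ = xa t₀ - xb t₀ := rfl
    rw [e4, e5, h1, h2]
    calc (xa t₀ + ∫ s in t₀..t, toEuc (A (u s) *ᵥ xa s + B (u s)))
        - (xb t₀ + ∫ s in t₀..t, toEuc (A (u s) *ᵥ xb s + B (u s)))
        = (xa t₀ - xb t₀) + ((∫ s in t₀..t, toEuc (A (u s) *ᵥ xa s + B (u s)))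
          - ∫ s in t₀..t, toEuc (A (u s) *ᵥ xb s + B (u s))) := by abel
    _ = (xa t₀ - xb t₀) + ∫ s in t₀..t, toEuc (A (u s) *ᵥ ω s) :=
      congrArg (fun z => (xa t₀ - xb t₀) + z) hsubint
  -- output of ω vanishes
  have hCω : ∀ s ∈ Icc t₀ t₁, ((C *ᵥ ω s) 0 : ℝ) = 0 := by
    intro s hs
    have e4 : ω s = xa s - xb s := rfl
    have h2 : Ψ (ω s) = Ψ (xa s) - Ψ (xb s) := by rw [e4, map_sub]
    have : (C *ᵥ ω s) 0 = (C *ᵥ xa s) 0 - (C *ᵥ xb s) 0 := by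
      calc (C *ᵥ ω s) 0 = (Ψ (ω s)) 0 := rfl
      _ = (Ψ (xa s)) 0 - (Ψ (xb s)) 0 := by rw [h2]; rfl
      _ = (C *ᵥ xa s) 0 - (C *ᵥ xb s) 0 := rfl
    rw [this, hy s hs, sub_self]
  -- ω t₁ = 0 from the Gramian
  have hωt₁ : ω t₁ = 0 := by
    have hg1 := hgram ω hωc hωeq
    have hI : ∫ s in t₀..t₁, ((C *ᵥ ω s) 0) ^ 2 = 0 := by
      have : ∫ s in t₀..t₁, ((C *ᵥ ω s) 0) ^ 2 = ∫ s in t₀..t₁, (0 : ℝ) := by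
        apply intervalIntegral.integral_congr
        intro s hs
        have hs' : s ∈ Icc t₀ t₁ := by rwa [uIcc_of_le ht] at hs
        show ((C *ᵥ ω s) 0) ^ 2 = 0
        rw [hCω s hs']; norm_num
      rw [this]; simp
    rw [hI] at hg1
    have h2 : ‖ω t₁‖ ^ 2 ≤ 0 := by nlinarith
    have h3 : ‖ω t₁‖ = 0 := by nlinarith [norm_nonneg (ω t₁), sq_nonneg ‖ω t₁‖]
    exact norm_eq_zero.1 h3
  -- Gronwall inequality setup
  obtain ⟨S₀, hS₀⟩ := (isCompact_Icc (a := t₀) (b := t₁)).exists_bound_of_continuousOn hωc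
  set S := max S₀ 0 with hSdef
  have hS : 0 ≤ S := le_max_right _ _
  have hφS : ∀ t ∈ Icc t₀ t₁, ‖ω t‖ ≤ S := fun t htt => (hS₀ t htt).trans (le_max_left _ _)
  have hineq : ∀ t ∈ Icc t₀ t₁, ‖ω t‖ ≤ K * ∫ s in t..t₁, ‖ω s‖ := by
    intro t htt
    have htt₁ : t ≤ t₁ := htt.2
    have hadj : (∫ s in t₀..t, toEuc (A (u s) *ᵥ ω s))
        + (∫ s in t..t₁, toEuc (A (u s) *ᵥ ω s))
        = ∫ s in t₀..t₁, toEuc (A (u s) *ᵥ ω s) :=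
      intervalIntegral.integral_add_adjacent_intervals (hf t₀ t ht₀mem htt)
        (hf t t₁ htt ht₁mem)
    have hωt : ω t = - ∫ s in t..t₁, toEuc (A (u s) *ᵥ ω s) := by
      have e1 := hωeq t htt
      have e2 := hωeq t₁ ht₁mem
      rw [hωt₁] at e2
      have h7 : (ω t) + (∫ s in t..t₁, toEuc (A (u s) *ᵥ ω s)) = 0 := by
        rw [e1, add_assoc, hadj]
        exact e2.symm
      exact eq_neg_of_add_eq_zero_left h7
    have hsub' : Icc t t₁ ⊆ Icc t₀ t₁ := Icc_subset_Icc htt.1 le_rfl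
    calc ‖ω t‖ = ‖∫ s in t..t₁, toEuc (A (u s) *ᵥ ω s)‖ := by rw [hωt, norm_neg]
    _ ≤ ∫ s in t..t₁, ‖toEuc (A (u s) *ᵥ ω s)‖ :=
        intervalIntegral.norm_integral_le_integral_norm htt₁
    _ ≤ ∫ s in t..t₁, K * ‖ω s‖ := by
        have hc : ContinuousOn (fun s => K * ‖ω s‖) (uIcc t t₁) := by
          rw [uIcc_of_le htt₁]
          exact continuousOn_const.mul ((hωc.mono hsub').norm)
        apply intervalIntegral.integral_mono_on htt₁ ((hf t t₁ htt ht₁mem).norm)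
          hc.intervalIntegrable
        intro s hs
        have hs' : s ∈ Icc t₀ t₁ := hsub' hs
        have e6 : ‖toEuc (A (u s) *ᵥ ω s)‖ = ‖Φ (A (u s)) (ω s)‖ := rfl
        rw [e6]
        calc ‖Φ (A (u s)) (ω s)‖ ≤ ‖Φ (A (u s))‖ * ‖ω s‖ := (Φ (A (u s))).le_opNorm _
        _ ≤ K * ‖ω s‖ := mul_le_mul_of_nonneg_right (hKA s hs') (norm_nonneg _)
    _ = K * ∫ s in t..t₁, ‖ω s‖ := by rw [intervalIntegral.integral_const_mul]
  -- conclude via Gronwall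
  have hzero := gronwall_int hK hS (hωc.norm) hφS hineq
  intro t htt
  have h0 : ‖ω t‖ = 0 := le_antisymm (hzero t htt) (norm_nonneg _)
  have h1 : ω t = 0 := norm_eq_zero.1 h0
  have e : ω t = xa t - xb t := rfl
  rw [e] at h1
  exact sub_eq_zero.1 h1
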